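/- Let 0<p<1, φ>0, and let n ≥ 1 be an integer. On a probability space, let ℓ be a random variable with the Poisson distribution of mean −φ·ln(1−p), and let (u_i)_{i≥1} be an i.i.d. sequence with distribution Log(p), independent of ℓ; set S = Σ_{i=1}^{ℓ} u_i (the compound Poisson sum, with S = 0 when ℓ = 0). Then P(S = n) > 0, and for every integer j with 0 ≤ j ≤ n, the conditional probability satisfies P(ℓ = j | S = n) = F(n,j)·φ^j / Σ_{j'=1}^{n} F(n,j')·φ^{j'}. -/

import Mathlib

open MeasureTheory ProbabilityTheory

/-- Normalized unsigned Stirling numbers of the first kind: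
`F 0 0 = 1`, `F n 0 = 0` for `n > 0`, `F n j = 0` for `j > n`, and
`F (n+1) j = (n/(n+1)) * F n j + (1/(n+1)) * F n (j-1)`. -/
noncomputable def F : ℕ → ℕ → ℝ
  | 0, 0 => 1
  | 0, _ + 1 => 0
  | _ + 1, 0 => 0
  | n + 1, j + 1 => ((n : ℝ) / (n + 1)) * F n (j + 1) + (1 / ((n : ℝ) + 1)) * F n j

namespace CPAux

noncomputable def logf (p L : ℝ) (k : ℕ) : ℝ := if k = 0 then 0 else p ^ k / (k * L)

noncomputable def cv (p L : ℝ) : ℕ → ℕ → ℝ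
  | 0 => fun n => if n = 0 then 1 else 0
  | j + 1 => fun n => ∑ k ∈ Finset.range (n + 1), cv p L j (n - k) * logf p L k

variable {p L : ℝ}

lemma cv_zero (n : ℕ) : cv p L 0 n = if n = 0 then 1 else 0 := rfl

lemma cv_succ (j n : ℕ) :
    cv p L (j + 1) n = ∑ k ∈ Finset.range (n + 1), cv p L j (n - k) * logf p L k := rfl

lemma logf_nonneg (hp : 0 ≤ p) (hL : 0 ≤ L) (k : ℕ) : 0 ≤ logf p L k := by
  unfold logf; split
  · exact le_refl 0
  · positivity

lemma cv_nonneg (hp : 0 ≤ p) (hL : 0 ≤ L) : ∀ j n, 0 ≤ cv p L j n := by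
  intro j
  induction j with
  | zero => intro n; rw [cv_zero]; split <;> norm_num
  | succ j ih =>
    intro n
    rw [cv_succ]
    exact Finset.sum_nonneg fun k _ => mul_nonneg (ih _) (logf_nonneg hp hL k)

lemma cv_eq_zero_of_lt : ∀ j n, n < j → cv p L j n = 0 := by
  intro j
  induction j with
  | zero => intro n h; omega
  | succ j ih =>
    intro n h
    rw [cv_succ]
    apply Finset.sum_eq_zero
    intro k hk
    match k with
    | 0 => simp [logf]
    | k + 1 =>
      rw [ih (n - (k + 1)) (by simp at hk; omega)]
      ring

lemma cv_one (m : ℕ) : cv p L 1 m = logf p L m := by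
  rw [cv_succ]
  rw [Finset.sum_eq_single m]
  · simp [cv_zero]
  · intro k hk hne
    simp only [Finset.mem_range] at hk
    rw [cv_zero, if_neg (by omega)]; ring
  · intro h; simp at h

lemma mul_logf (hL : L ≠ 0) (k : ℕ) :
    (k : ℝ) * logf p L k = if k = 0 then 0 else p ^ k / L := by
  match k with
  | 0 => simp [logf]
  | k + 1 =>
    rw [logf, if_neg (by omega), if_neg (by omega)]
    have : ((k : ℝ) + 1) ≠ 0 := by positivity
    push_cast
    field_simp

lemma cv_deriv (hp : p ≠ 0) (hL : L ≠ 0) :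
    ∀ (j : ℕ) (n : ℕ), ((n : ℝ) + 1) * cv p L (j + 1) (n + 1)
      = p * n * cv p L (j + 1) n + (((j : ℝ) + 1) * p / L) * cv p L j n := by
  intro j
  induction j with
  | zero =>
    intro n
    rw [cv_one, cv_one, cv_zero]
    match n with
    | 0 =>
      simp only [Nat.cast_zero, if_pos rfl, logf, if_neg (by omega : (1:ℕ) ≠ 0)]
      push_cast
      ring
    | n + 1 =>
      rw [if_neg (by omega), logf, logf, if_neg (by omega), if_neg (by omega)]
      push_cast
      have h1 : ((n : ℝ) + 1) ≠ 0 := by positivity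
      have h2 : ((n : ℝ) + 1 + 1) ≠ 0 := by positivity
      field_simp
      ring
  | succ j ih =>
    intro n
    have hcast : ∀ k : ℕ, k ≤ n → ((n - k : ℕ) : ℝ) = (n : ℝ) - k := by
      intro k hk; push_cast [hk]; ring
    -- expand LHS into a sum over range (n+1)
    have lhs_eq : ((n : ℝ) + 1) * cv p L (j + 1 + 1) (n + 1)
        = ∑ k ∈ Finset.range (n + 1),
            ((n : ℝ) + 1) * (cv p L (j + 1) (n + 1 - k) * logf p L k) := by
      rw [cv_succ, Finset.mul_sum, Finset.sum_range_succ]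
      have h0 : cv p L (j + 1) (n + 1 - (n + 1)) = 0 := by
        rw [Nat.sub_self]; exact cv_eq_zero_of_lt _ _ (by omega)
      rw [h0]; ring
    -- per-term split of the LHS using the induction hypothesis
    have step1 : ∀ k ∈ Finset.range (n + 1),
        ((n : ℝ) + 1) * (cv p L (j + 1) (n + 1 - k) * logf p L k)
        = (p * ((n : ℝ) - k) * cv p L (j + 1) (n - k)
            + ((j : ℝ) + 1) * p / L * cv p L j (n - k)) * logf p L k
          + cv p L (j + 1) (n + 1 - k) * ((k : ℝ) * logf p L k) := by
      intro k hk
      simp only [Finset.mem_range] at hk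
      have hk' : k ≤ n := by omega
      have he : n + 1 - k = (n - k) + 1 := by omega
      have hihk := ih (n - k)
      rw [hcast k hk'] at hihk
      calc ((n : ℝ) + 1) * (cv p L (j + 1) (n + 1 - k) * logf p L k)
          = ((((n : ℝ) - k) + 1) * cv p L (j + 1) ((n - k) + 1)) * logf p L k
            + cv p L (j + 1) (n + 1 - k) * ((k : ℝ) * logf p L k) := by
            rw [he]; ring
        _ = _ := by rw [hihk]
    -- expand p * n * cv (j+2) n similarly
    have rhs_eq : p * (n : ℝ) * cv p L (j + 1 + 1) n
        = (∑ k ∈ Finset.range (n + 1),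
            p * ((n : ℝ) - k) * cv p L (j + 1) (n - k) * logf p L k)
          + ∑ k ∈ Finset.range (n + 1),
              p * (cv p L (j + 1) (n - k) * ((k : ℝ) * logf p L k)) := by
      rw [cv_succ, Finset.mul_sum, ← Finset.sum_add_distrib]
      apply Finset.sum_congr rfl
      intro k hk
      simp only [Finset.mem_range] at hk
      ring
    -- telescoping identity for the B-part
    have hB : (∑ k ∈ Finset.range (n + 1),
          cv p L (j + 1) (n + 1 - k) * ((k : ℝ) * logf p L k))
        = (∑ k ∈ Finset.range (n + 1),
            p * (cv p L (j + 1) (n - k) * ((k : ℝ) * logf p L k)))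
          + (p / L) * cv p L (j + 1) n := by
      have hgl : ∀ k : ℕ, cv p L (j + 1) (n + 1 - (k + 1)) * (((k : ℝ) + 1) * logf p L (k + 1))
          = cv p L (j + 1) (n - k) * (p ^ (k + 1) / L) := by
        intro k
        have : n + 1 - (k + 1) = n - k := by omega
        rw [this]
        have hm := mul_logf (p := p) hL (k + 1)
        rw [if_neg (by omega)] at hm
        push_cast at hm
        rw [hm]
      have hgr : ∀ k : ℕ, p * (cv p L (j + 1) (n - (k + 1)) * (((k : ℝ) + 1) * logf p L (k + 1)))
          = cv p L (j + 1) (n - (k + 1)) * (p ^ (k + 2) / L) := by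
        intro k
        have hm := mul_logf (p := p) hL (k + 1)
        rw [if_neg (by omega)] at hm
        push_cast at hm
        rw [hm]
        ring
      rw [Finset.sum_range_succ', Finset.sum_range_succ']
      simp only [Nat.cast_zero, zero_mul, mul_zero, add_zero, Nat.cast_add, Nat.cast_one]
      simp only [hgl, hgr]
      -- now: ∑_{k<n} g k = ∑_{k<n} g (k+1) + (p/L) * cv (j+1) n   with g k = cv (n-k) * p^(k+1)/L
      have key : ∑ k ∈ Finset.range n, cv p L (j + 1) (n - k) * (p ^ (k + 1) / L)
          = (∑ k ∈ Finset.range n, cv p L (j + 1) (n - (k + 1)) * (p ^ (k + 1 + 1) / L))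
            + cv p L (j + 1) (n - 0) * (p ^ (0 + 1) / L) := by
        rw [← Finset.sum_range_succ' (fun k => cv p L (j + 1) (n - k) * (p ^ (k + 1) / L)) n]
        rw [Finset.sum_range_succ]
        have h0 : cv p L (j + 1) (n - n) = 0 := by
          rw [Nat.sub_self]; exact cv_eq_zero_of_lt _ _ (by omega)
        rw [h0]; ring
      have hsame : ∀ k ∈ Finset.range n,
          cv p L (j + 1) (n - (k + 1)) * (p ^ (k + 1 + 1) / L)
          = cv p L (j + 1) (n - (k + 1)) * (p ^ (k + 2) / L) := by
        intro k _; norm_num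
      rw [key, Finset.sum_congr rfl hsame]
      simp only [Nat.sub_zero, pow_one]
      ring
    -- put everything together
    rw [lhs_eq, Finset.sum_congr rfl step1, Finset.sum_add_distrib, hB, rhs_eq]
    have expand : ∀ k ∈ Finset.range (n + 1),
        (p * ((n : ℝ) - k) * cv p L (j + 1) (n - k)
          + ((j : ℝ) + 1) * p / L * cv p L j (n - k)) * logf p L k
        = p * ((n : ℝ) - k) * cv p L (j + 1) (n - k) * logf p L k
          + ((j : ℝ) + 1) * p / L * (cv p L j (n - k) * logf p L k) := by
      intro k _; ring
    rw [Finset.sum_congr rfl expand, Finset.sum_add_distrib, ← Finset.mul_sum, ← cv_succ]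
    push_cast
    ring

lemma F_succ_zero (n : ℕ) : F (n + 1) 0 = 0 := rfl

lemma F_zero_succ (j : ℕ) : F 0 (j + 1) = 0 := rfl

lemma F_rec (n j : ℕ) : F (n + 1) (j + 1)
    = ((n : ℝ) / (n + 1)) * F n (j + 1) + (1 / ((n : ℝ) + 1)) * F n j := rfl

lemma cv_eq_F (hp : 0 < p) (hL : 0 < L) :
    ∀ n j, cv p L j n = (Nat.factorial j : ℝ) * F n j * p ^ n / L ^ j := by
  have hp' : p ≠ 0 := ne_of_gt hp
  have hL' : L ≠ 0 := ne_of_gt hL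
  intro n
  induction n with
  | zero =>
    intro j
    match j with
    | 0 => simp [cv_zero, F]
    | j + 1 =>
      rw [cv_succ, F_zero_succ]
      norm_num [logf]
  | succ n ih =>
    intro j
    match j with
    | 0 =>
      rw [cv_zero, if_neg (by omega), F_succ_zero]
      ring
    | j + 1 =>
      have hd := cv_deriv hp' hL' j n
      rw [ih (j + 1), ih j, F_rec] at *
      have hn1 : ((n : ℝ) + 1) ≠ 0 := by positivity
      have hfac : (Nat.factorial (j + 1) : ℝ) = ((j : ℝ) + 1) * Nat.factorial j := by
        push_cast [Nat.factorial_succ]; ring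
      have hLj : (L : ℝ) ^ j ≠ 0 := pow_ne_zero _ hL'
      have hLj1 : (L : ℝ) ^ (j + 1) ≠ 0 := pow_ne_zero _ hL'
      have hfj : (Nat.factorial j : ℝ) ≠ 0 := by positivity
      -- solve for cv (j+1) (n+1) from hd
      have : cv p L (j + 1) (n + 1)
          = (p * n * ((Nat.factorial (j+1) : ℝ) * F n (j+1) * p ^ n / L ^ (j+1))
             + ((j : ℝ) + 1) * p / L * ((Nat.factorial j : ℝ) * F n j * p ^ n / L ^ j))
            / ((n : ℝ) + 1) := by
        rw [← hd]; field_simp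
      rw [this, hfac]
      field_simp
      ring

lemma F_nonneg (hp : 0 < p) (hL : 0 < L) (n j : ℕ) : 0 ≤ F n j := by
  have h := cv_eq_F (p := p) (L := L) hp hL n j
  have h2 := cv_nonneg (p := p) (L := L) hp.le hL.le j n
  rw [h] at h2
  by_contra hneg
  push_neg at hneg
  have hfac : (0:ℝ) < (Nat.factorial j : ℝ) := by exact_mod_cast Nat.factorial_pos j
  have hlt : (Nat.factorial j : ℝ) * F n j * p ^ n / L ^ j < 0 := by
    apply div_neg_of_neg_of_pos _ (pow_pos hL j)
    exact mul_neg_of_neg_of_pos (mul_neg_of_pos_of_neg hfac hneg) (pow_pos hp n)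
  linarith

lemma F_eq_zero_of_lt : ∀ n j, n < j → F n j = 0 := by
  intro n
  induction n with
  | zero => intro j h; match j with | j + 1 => exact F_zero_succ j
  | succ n ih =>
    intro j h
    match j with
    | j + 1 =>
      rw [F_rec, ih (j + 1) (by omega), ih j (by omega)]
      ring

lemma F_one : ∀ n, 1 ≤ n → F n 1 = 1 / (n : ℝ) := by
  intro n
  induction n with
  | zero => omega
  | succ n ih =>
    intro _
    match n, ih with
    | 0, _ => norm_num [F_rec, F]
    | n + 1, ih =>
      rw [F_rec, ih (by omega), F_succ_zero]
      have : ((n : ℝ) + 1) ≠ 0 := by positivity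
      push_cast
      field_simp
      ring

end CPAux

/-- Let `ℓ` be Poisson with mean `λ = -φ ln(1-p)` and `(uᵢ)` i.i.d. logarithmic `Log(p)`,
independent of `ℓ`, and let `S = ∑_{i<ℓ} uᵢ` be the compound Poisson sum. Then for `n ≥ 1`,
`P(S = n) > 0` and for `0 ≤ j ≤ n`,
`P(ℓ = j | S = n) = F(n,j) φ^j / ∑_{j'=1}^n F(n,j') φ^{j'}`. -/
theorem compound_poisson_conditional (p φ : ℝ) (hp0 : 0 < p) (hp1 : p < 1) (hφ : 0 < φ)
    (lam : ℝ) (hlam : lam = -φ * Real.log (1 - p))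
    {Ω : Type*} [MeasurableSpace Ω] (P : Measure Ω) [IsProbabilityMeasure P]
    (ℓ : Ω → ℕ) (u : ℕ → Ω → ℕ)
    (hℓmeas : Measurable ℓ) (humeas : ∀ i, Measurable (u i))
    (hℓdist : ∀ j : ℕ,
      P {ω | ℓ ω = j} = ENNReal.ofReal (Real.exp (-lam) * lam ^ j / (j.factorial : ℝ)))
    (hu0 : ∀ i, P {ω | u i ω = 0} = 0)
    (hudist : ∀ i, ∀ k : ℕ, 1 ≤ k →
      P {ω | u i ω = k} = ENNReal.ofReal (-p ^ k / ((k : ℝ) * Real.log (1 - p))))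
    (hindep : iIndepFun (m := fun _ : Option ℕ => (inferInstance : MeasurableSpace ℕ))
      (fun i : Option ℕ => Option.elim i ℓ u) P)
    (S : Ω → ℕ) (hS : ∀ ω, S ω = ∑ i ∈ Finset.range (ℓ ω), u i ω)
    (n : ℕ) (hn : 1 ≤ n) :
    0 < P {ω | S ω = n} ∧
      ∀ j : ℕ, j ≤ n →
        P[{ω | ℓ ω = j} | {ω | S ω = n}] =
          ENNReal.ofReal (F n j * φ ^ j / ∑ j' ∈ Finset.Icc 1 n, F n j' * φ ^ j') := by
  classical
  have hlog : Real.log (1 - p) < 0 := Real.log_neg (by linarith) (by linarith)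
  set L : ℝ := -Real.log (1 - p) with hLdef
  have hL : 0 < L := by rw [hLdef]; linarith
  have hL' : L ≠ 0 := ne_of_gt hL
  have hlamL : lam = φ * L := by rw [hlam, hLdef]; ring
  have hlampos : 0 < lam := by rw [hlamL]; positivity
  set T : ℕ → Ω → ℕ := fun j ω => ∑ i ∈ Finset.range j, u i ω with hT
  have hTmeas : ∀ j, Measurable (T j) := by
    intro j
    exact Finset.measurable_sum _ fun i _ => humeas i
  have hXmeas : ∀ i : Option ℕ, Measurable (Option.elim i ℓ u) := by
    rintro (_ | i)
    · exact hℓmeas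
    · exact humeas i
  have hsum_image : ∀ j : ℕ,
      (∑ i ∈ (Finset.range j).image some, (fun i : Option ℕ => Option.elim i ℓ u) i) = T j := by
    intro j
    funext ω
    rw [Finset.sum_apply]
    rw [Finset.sum_image (fun x _ y _ h => Option.some_injective _ h)]
    rfl
  have hindep_Tu : ∀ j : ℕ, IndepFun (T j) (u j) P := by
    intro j
    have h := hindep.indepFun_finset_sum_of_notMem hXmeas
      (s := (Finset.range j).image some) (i := some j) (by simp)
    rwa [hsum_image j] at h
  have hindep_Tℓ : ∀ j : ℕ, IndepFun (T j) ℓ P := by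
    intro j
    have h := hindep.indepFun_finset_sum_of_notMem hXmeas
      (s := (Finset.range j).image some) (i := none) (by simp)
    rwa [hsum_image j] at h
  have hu_eq : ∀ i k, P {ω | u i ω = k} = ENNReal.ofReal (CPAux.logf p L k) := by
    intro i k
    match k with
    | 0 => rw [hu0 i]; simp [CPAux.logf]
    | k + 1 =>
      rw [hudist i (k + 1) (by omega)]
      congr 1
      rw [CPAux.logf, if_neg (by omega)]
      have hk : ((k : ℝ) + 1) ≠ 0 := by positivity
      have hlog' : Real.log (1 - p) ≠ 0 := ne_of_lt hlog
      rw [hLdef]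
      push_cast
      field_simp
  have key1 : ∀ j n', P {ω | T j ω = n'} = ENNReal.ofReal (CPAux.cv p L j n') := by
    intro j
    induction j with
    | zero =>
      intro n'
      rw [CPAux.cv_zero]
      match n' with
      | 0 =>
        have he : {ω | T 0 ω = 0} = Set.univ := by
          ext ω; simp [hT]
        rw [he]; simp
      | m + 1 =>
        have he : {ω | T 0 ω = m + 1} = ∅ := by
          ext ω; simp [hT]
        rw [he]; simp
    | succ j ih =>
      intro n'
      have hset : {ω | T (j + 1) ω = n'}
          = ⋃ k ∈ Finset.range (n' + 1), ({ω | T j ω = n' - k} ∩ {ω | u j ω = k}) := by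
        ext ω
        simp only [Set.mem_setOf_eq, Set.mem_iUnion, Set.mem_inter_iff, Finset.mem_range,
          exists_prop]
        have hTs : T (j + 1) ω = T j ω + u j ω := Finset.sum_range_succ _ _
        constructor
        · intro h; exact ⟨u j ω, by omega, by omega, rfl⟩
        · rintro ⟨k, hk, h1, h2⟩; omega
      have hdisj : (↑(Finset.range (n' + 1)) : Set ℕ).PairwiseDisjoint
          (fun k => ({ω | T j ω = n' - k} ∩ {ω | u j ω = k})) := by
        intro a _ b _ hab
        apply Set.disjoint_left.mpr
        rintro ω ⟨_, h1⟩ ⟨_, h2⟩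
        exact hab (by rw [← h1, ← h2])
      have hmeas' : ∀ k ∈ Finset.range (n' + 1),
          MeasurableSet ({ω | T j ω = n' - k} ∩ {ω | u j ω = k}) := by
        intro k _
        exact ((hTmeas j) (measurableSet_singleton _)).inter
          ((humeas j) (measurableSet_singleton _))
      rw [hset, measure_biUnion_finset hdisj hmeas', CPAux.cv_succ,
        ENNReal.ofReal_sum_of_nonneg (fun k _ =>
          mul_nonneg (CPAux.cv_nonneg hp0.le hL.le _ _) (CPAux.logf_nonneg hp0.le hL.le _))]
      apply Finset.sum_congr rfl
      intro k _
      have h := (hindep_Tu j).measure_inter_preimage_eq_mul {n' - k} {k}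
        (measurableSet_singleton _) (measurableSet_singleton _)
      have e1 : T j ⁻¹' {n' - k} = {ω | T j ω = n' - k} := rfl
      have e2 : u j ⁻¹' {k} = {ω | u j ω = k} := rfl
      rw [e1, e2] at h
      rw [h, ih, hu_eq, ENNReal.ofReal_mul (CPAux.cv_nonneg hp0.le hL.le _ _)]
  have key2 : ∀ j n', P ({ω | ℓ ω = j} ∩ {ω | T j ω = n'})
      = P {ω | ℓ ω = j} * P {ω | T j ω = n'} := by
    intro j n'
    have h := (hindep_Tℓ j).measure_inter_preimage_eq_mul {n'} {j}
      (measurableSet_singleton _) (measurableSet_singleton _)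
    have e1 : T j ⁻¹' {n'} = {ω | T j ω = n'} := rfl
    have e2 : ℓ ⁻¹' {j} = {ω | ℓ ω = j} := rfl
    rw [e1, e2] at h
    rw [Set.inter_comm, h, mul_comm]
  have hST : ∀ ω, S ω = T (ℓ ω) ω := fun ω => hS ω
  have hSset : {ω | S ω = n} = ⋃ j : ℕ, ({ω | ℓ ω = j} ∩ {ω | T j ω = n}) := by
    ext ω
    simp only [Set.mem_setOf_eq, Set.mem_iUnion, Set.mem_inter_iff]
    constructor
    · intro h; exact ⟨ℓ ω, rfl, by rw [← hST ω]; exact h⟩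
    · rintro ⟨j, h1, h2⟩; rw [hST ω, h1]; exact h2
  have hmS : MeasurableSet {ω | S ω = n} := by
    rw [hSset]
    exact MeasurableSet.iUnion fun j =>
      (hℓmeas (measurableSet_singleton j)).inter ((hTmeas j) (measurableSet_singleton n))
  have hPS : P {ω | S ω = n} = ∑' j, P ({ω | ℓ ω = j} ∩ {ω | T j ω = n}) := by
    rw [hSset]
    apply measure_iUnion
    · intro a b hab
      apply Set.disjoint_left.mpr
      rintro ω ⟨h1, _⟩ ⟨h2, _⟩
      exact hab (by rw [← h1, ← h2])
    · intro j
      exact (hℓmeas (measurableSet_singleton j)).inter ((hTmeas j) (measurableSet_singleton n))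
  obtain ⟨m, rfl⟩ : ∃ m, n = m + 1 := ⟨n - 1, by omega⟩
  set n := m + 1
  have hterm : ∀ j, P ({ω | ℓ ω = j} ∩ {ω | T j ω = n})
      = ENNReal.ofReal (Real.exp (-lam) * p ^ n * (F n j * φ ^ j)) := by
    intro j
    have hnn : 0 ≤ Real.exp (-lam) * lam ^ j / (j.factorial : ℝ) := by positivity
    rw [key2 j n, hℓdist j, key1 j n, ← ENNReal.ofReal_mul hnn]
    congr 1
    rw [CPAux.cv_eq_F hp0 hL n j, hlamL]
    have hfj : ((j.factorial : ℝ)) ≠ 0 := by positivity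
    field_simp
    ring
  have hFnn : ∀ j', 0 ≤ F n j' * φ ^ j' := fun j' =>
    mul_nonneg (CPAux.F_nonneg (p := p) (L := L) hp0 hL n j') (by positivity)
  have hSpos : 0 < ∑ j' ∈ Finset.Icc 1 n, F n j' * φ ^ j' := by
    have h1 : F n 1 * φ ^ 1 ≤ ∑ j' ∈ Finset.Icc 1 n, F n j' * φ ^ j' :=
      Finset.single_le_sum (f := fun j' => F n j' * φ ^ j') (fun i _ => hFnn i)
        (Finset.mem_Icc.mpr ⟨le_refl 1, hn⟩)
    have h2 : 0 < F n 1 * φ ^ 1 := by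
      rw [CPAux.F_one n hn]
      have : (0:ℝ) < (n:ℝ) := by positivity
      positivity
    linarith
  have hsum_F : ∑ j ∈ Finset.range (n + 1), F n j * φ ^ j
      = ∑ j' ∈ Finset.Icc 1 n, F n j' * φ ^ j' := by
    have hins : Finset.range (n + 1) = insert 0 (Finset.Icc 1 n) := by
      ext x
      simp only [Finset.mem_range, Finset.mem_insert, Finset.mem_Icc]
      omega
    rw [hins, Finset.sum_insert (by simp)]
    rw [show F n 0 = 0 from CPAux.F_succ_zero m]
    ring
  have hPSval : P {ω | S ω = n}
      = ENNReal.ofReal (Real.exp (-lam) * p ^ n * ∑ j' ∈ Finset.Icc 1 n, F n j' * φ ^ j') := by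
    rw [hPS, tsum_eq_sum (s := Finset.range (n + 1)) ?tail]
    case tail =>
      intro j hj
      rw [hterm j, CPAux.F_eq_zero_of_lt n j (by simp only [Finset.mem_range] at hj; omega)]
      simp
    rw [Finset.sum_congr rfl fun j _ => hterm j,
      ← ENNReal.ofReal_sum_of_nonneg (fun j _ => by
        have := hFnn j
        positivity)]
    rw [← Finset.mul_sum, hsum_F]
  constructor
  · rw [hPSval]
    apply ENNReal.ofReal_pos.mpr
    positivity
  · intro j hj
    rw [cond_apply hmS]
    have hint : {ω | S ω = n} ∩ {ω | ℓ ω = j} = {ω | ℓ ω = j} ∩ {ω | T j ω = n} := by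
      ext ω
      simp only [Set.mem_inter_iff, Set.mem_setOf_eq]
      constructor
      · rintro ⟨h1, h2⟩
        refine ⟨h2, ?_⟩
        rw [← h2]
        rw [← hST ω]
        exact h1
      · rintro ⟨h1, h2⟩
        exact ⟨by rw [hST ω, h1]; exact h2, h1⟩
    rw [hint, hterm j, hPSval]
    have hC : (0:ℝ) < Real.exp (-lam) * p ^ n := by positivity
    have h1 : F n j * φ ^ j / (∑ j' ∈ Finset.Icc 1 n, F n j' * φ ^ j')
        = (Real.exp (-lam) * p ^ n * (F n j * φ ^ j))
          / (Real.exp (-lam) * p ^ n * ∑ j' ∈ Finset.Icc 1 n, F n j' * φ ^ j') := by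
      rw [mul_div_mul_left _ _ (ne_of_gt hC)]
    rw [h1, ENNReal.ofReal_div_of_pos (mul_pos hC hSpos), ENNReal.div_eq_inv_mul]
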